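/- For every natural number n ≠ 6, every automorphism of the symmetric group Equiv.Perm (Fin n) is inner: for every group automorphism f of Equiv.Perm (Fin n) there exists g ∈ Equiv.Perm (Fin n) such that f(x) = g·x·g⁻¹ for all x. -/

import Mathlib

open Equiv Equiv.Perm

theorem Equiv.Perm.inv_apply_self {β : Type*} (f : Perm β) (x : β) : f⁻¹ (f x) = x :=
  f.symm_apply_apply x
set_option linter.unusedVariables false
set_option linter.unusedSectionVars false
variable {α : Type*} [DecidableEq α]


lemma swap_commute_of_ne {a b c d : α} (hac : a ≠ c) (had : a ≠ d) (hbc : b ≠ c) (hbd : b ≠ d) :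
    Commute (Equiv.swap a b) (Equiv.swap c d) := by
  show _ * _ = _ * _
  ext x
  simp only [Perm.mul_apply]
  rcases eq_or_ne x a with rfl | hxa
  · rw [Equiv.swap_apply_of_ne_of_ne hac had, Equiv.swap_apply_left,
      Equiv.swap_apply_of_ne_of_ne hbc hbd]
  rcases eq_or_ne x b with rfl | hxb
  · rw [Equiv.swap_apply_of_ne_of_ne hbc hbd, Equiv.swap_apply_right,
      Equiv.swap_apply_of_ne_of_ne hac had]
  rcases eq_or_ne x c with rfl | hxc
  · rw [Equiv.swap_apply_of_ne_of_ne (Ne.symm hac) (Ne.symm hbc), Equiv.swap_apply_left,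
      Equiv.swap_apply_of_ne_of_ne (Ne.symm had) (Ne.symm hbd)]
  rcases eq_or_ne x d with rfl | hxd
  · rw [Equiv.swap_apply_of_ne_of_ne (Ne.symm had) (Ne.symm hbd), Equiv.swap_apply_right,
      Equiv.swap_apply_of_ne_of_ne (Ne.symm hac) (Ne.symm hbc)]
  rw [Equiv.swap_apply_of_ne_of_ne hxa hxb, Equiv.swap_apply_of_ne_of_ne hxc hxd,
    Equiv.swap_apply_of_ne_of_ne hxa hxb]

lemma swap_mul_swap_pow_six [Fintype α] {a b c d : α} (hab : a ≠ b) (hcd : c ≠ d) :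
    (Equiv.swap a b * Equiv.swap c d) ^ 6 = 1 := by
  have cube : ∀ x y z : α, x ≠ y → x ≠ z → y ≠ z →
      (Equiv.swap x y * Equiv.swap x z) ^ 6 = 1 := by
    intro x y z h1 h2 h3
    have h6 : orderOf (Equiv.swap x y * Equiv.swap x z) = 3 :=
      (isThreeCycle_swap_mul_swap_same h1 h2 h3).orderOf
    have := pow_orderOf_eq_one (Equiv.swap x y * Equiv.swap x z)
    rw [h6] at this
    rw [show (6 : ℕ) = 3 * 2 from rfl, pow_mul, this, one_pow]
  rcases eq_or_ne c a with h | hca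
  · rw [h] at hcd ⊢
    rcases eq_or_ne d b with h' | hdb
    · rw [h', Equiv.swap_mul_self, one_pow]
    · exact cube a b d hab hcd (Ne.symm hdb)
  rcases eq_or_ne c b with h | hcb
  · rw [h] at hcd ⊢
    rcases eq_or_ne d a with h' | hda
    · rw [h', Equiv.swap_comm b a, Equiv.swap_mul_self, one_pow]
    · rw [Equiv.swap_comm a b]
      exact cube b a d (Ne.symm hab) hcd (Ne.symm hda)
  rcases eq_or_ne d a with h | hda
  · rw [h] at hcd ⊢
    rw [Equiv.swap_comm c a]
    exact cube a b c hab (Ne.symm hca) (Ne.symm hcb)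
  rcases eq_or_ne d b with h | hdb
  · rw [h] at hcd ⊢
    rw [Equiv.swap_comm a b, Equiv.swap_comm c b]
    exact cube b a c (Ne.symm hab) (Ne.symm hcb) (Ne.symm hca)
  · have hc := swap_commute_of_ne (Ne.symm hca) (Ne.symm hda) (Ne.symm hcb) (Ne.symm hdb)
    have h2 : (Equiv.swap a b * Equiv.swap c d) ^ 2 = 1 := by
      rw [sq, mul_assoc, ← mul_assoc (Equiv.swap c d), ← hc.eq, mul_assoc, ← mul_assoc,
        Equiv.swap_mul_self, Equiv.swap_mul_self, one_mul]
    rw [show (6 : ℕ) = 2 * 3 from rfl, pow_mul, h2, one_pow]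

lemma share_point {x y : α} (hxy : x ≠ y) {t : Perm α} (ht : t.IsSwap)
    (h : ¬ Commute (Equiv.swap x y) t) :
    (∃ e, e ≠ x ∧ e ≠ y ∧ t = Equiv.swap x e) ∨ (∃ e, e ≠ x ∧ e ≠ y ∧ t = Equiv.swap y e) := by
  obtain ⟨c, d, hcd, rfl⟩ := ht
  rcases eq_or_ne c x with h1 | h1
  · rw [h1] at hcd ⊢
    refine Or.inl ⟨d, Ne.symm hcd, fun hdy => h ?_, rfl⟩
    subst hdy h1; exact rfl
  rcases eq_or_ne c y with h2 | h2
  · rw [h2] at hcd ⊢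
    refine Or.inr ⟨d, fun hdx => h ?_, Ne.symm hcd, rfl⟩
    subst hdx h2; rw [Equiv.swap_comm]
  rcases eq_or_ne d x with h3 | h3
  · rw [h3] at hcd ⊢
    exact Or.inl ⟨c, hcd, h2, Equiv.swap_comm c x⟩
  rcases eq_or_ne d y with h4 | h4
  · rw [h4] at hcd ⊢
    exact Or.inr ⟨c, h1, hcd, Equiv.swap_comm c y⟩
  · exact absurd (swap_commute_of_ne (Ne.symm h1) (Ne.symm h3) (Ne.symm h2) (Ne.symm h4)) h


lemma klein_commute {σ τ : Perm α} (hσ : σ * σ = 1) (hτ : τ * τ = 1)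
    {a c : α} (ha : σ a ≠ a) (hc : σ c ≠ c) (hca : c ≠ a) (hcb : c ≠ σ a)
    (hall : ∀ x, x = a ∨ x = σ a ∨ x = c ∨ x = σ c)
    (hτf : ∀ x, τ x ≠ x) : Commute σ τ := by
  have invσ : ∀ x, σ (σ x) = x := fun x => by rw [← Perm.mul_apply, hσ, Perm.one_apply]
  have invτ : ∀ x, τ (τ x) = x := fun x => by rw [← Perm.mul_apply, hτ, Perm.one_apply]
  have injτ : ∀ x y, τ x = τ y → x = y := fun x y h => by
    rw [← invτ x, h, invτ]
  set b := σ a with hb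
  set d := σ c with hd
  have hσb : σ b = a := invσ a
  have hσd : σ d = c := invσ c
  have hba : b ≠ a := ha
  have hdc : d ≠ c := hc
  have hda : d ≠ a := fun h => hcb (by rw [← hσd, h, ← hb])
  have hdb : d ≠ b := fun h => hca (by rw [← hσd, h, hσb])
  rcases hall (τ a) with h | h | h | h
  · exact absurd h (hτf a)
  · -- τ a = b, show τ = σ
    have hτb : τ b = a := by rw [← h, invτ]
    have hτc : τ c = d := by
      rcases hall (τ c) with h' | h' | h' | h'
      · exact absurd (injτ c b (by rw [h', ← hτb])) hcb
      · exact absurd (injτ c a (by rw [h', ← h])) hca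
      · exact absurd h' (hτf c)
      · exact h'
    have heq : τ = σ := by
      ext x
      rcases hall x with h' | h' | h' | h'
      · rw [h', h, hb]
      · rw [h', hτb, hσb]
      · rw [h', hτc, hd]
      · rw [h', hσd, ← hτc, invτ]
    rw [heq]
  · -- τ a = c
    have hτc : τ c = a := by rw [← h, invτ]
    have hτb : τ b = d := by
      rcases hall (τ b) with h' | h' | h' | h'
      · exact absurd (injτ b c (by rw [h', ← hτc])) (Ne.symm hcb)
      · exact absurd h' (hτf b)
      · exact absurd (injτ b a (by rw [h', ← h])) hba
      · exact h'
    have hτd : τ d = b := by rw [← hτb, invτ]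
    show σ * τ = τ * σ
    ext x
    simp only [Perm.mul_apply]
    rcases hall x with h' | h' | h' | h'
    · rw [h', h, ← hb, hτb, ← hd]
    · rw [h', hτb, hσd, hσb, h]
    · rw [h', hτc, ← hd, hτd, ← hb]
    · rw [h', hτd, hσb, hσd, hτc]
  · -- τ a = d
    have hτd : τ d = a := by rw [← h, invτ]
    have hτb : τ b = c := by
      rcases hall (τ b) with h' | h' | h' | h'
      · exact absurd (injτ b d (by rw [h', ← hτd])) hdb.symm
      · exact absurd h' (hτf b)
      · exact h'
      · exact absurd (injτ b a (by rw [h', ← h])) hba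
    have hτc : τ c = b := by rw [← hτb, invτ]
    show σ * τ = τ * σ
    ext x
    simp only [Perm.mul_apply]
    rcases hall x with h' | h' | h' | h'
    · rw [h', h, hσd, ← hb, hτb]
    · rw [h', hτb, ← hd, hσb, h]
    · rw [h', hτc, hσb, ← hd, hτd]
    · rw [h', hτd, hσd, hτc, ← hb]


lemma witness5 {σ : Perm α} {a b c d e : α}
    (hsa : σ a = b) (hsb : σ b = a) (hsc : σ c = d) (hsd : σ d = c) (hse : σ e = e)
    (hab : a ≠ b) (hac : a ≠ c) (had : a ≠ d) (hae : a ≠ e) (hbc : b ≠ c) (hbd : b ≠ d) (hbe : b ≠ e) (hcd : c ≠ d) (hce : c ≠ e) (hde : d ≠ e) :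
    ∃ w : Perm α, (σ * (w * σ * w⁻¹)) ^ 6 ≠ 1 := by
  set w : Perm α := Equiv.swap a b * Equiv.swap b c * Equiv.swap c d * Equiv.swap d e with hw
  have hwa : w a = b := by
    rw [hw]; simp only [Perm.mul_apply]
    rw [Equiv.swap_apply_of_ne_of_ne (had) (hae), Equiv.swap_apply_of_ne_of_ne (hac) (had), Equiv.swap_apply_of_ne_of_ne (hab) (hac), Equiv.swap_apply_left]
  have hwb : w b = c := by
    rw [hw]; simp only [Perm.mul_apply]
    rw [Equiv.swap_apply_of_ne_of_ne (hbd) (hbe), Equiv.swap_apply_of_ne_of_ne (hbc) (hbd), Equiv.swap_apply_left, Equiv.swap_apply_of_ne_of_ne (hac.symm) (hbc.symm)]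
  have hwc : w c = d := by
    rw [hw]; simp only [Perm.mul_apply]
    rw [Equiv.swap_apply_of_ne_of_ne (hcd) (hce), Equiv.swap_apply_left, Equiv.swap_apply_of_ne_of_ne (hbd.symm) (hcd.symm), Equiv.swap_apply_of_ne_of_ne (had.symm) (hbd.symm)]
  have hwd : w d = e := by
    rw [hw]; simp only [Perm.mul_apply]
    rw [Equiv.swap_apply_left, Equiv.swap_apply_of_ne_of_ne (hce.symm) (hde.symm), Equiv.swap_apply_of_ne_of_ne (hbe.symm) (hce.symm), Equiv.swap_apply_of_ne_of_ne (hae.symm) (hbe.symm)]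
  have hwe : w e = a := by
    rw [hw]; simp only [Perm.mul_apply]
    rw [Equiv.swap_apply_right, Equiv.swap_apply_right, Equiv.swap_apply_right, Equiv.swap_apply_right]
  have hwi : ∀ x y, w x = y → w⁻¹ y = x := fun x y h => by rw [← h, Perm.inv_apply_self]
  refine ⟨w, ?_⟩
  set m := σ * (w * σ * w⁻¹) with hm
  have hma : m a = b := by
    rw [hm]; simp only [Perm.mul_apply]
    rw [hwi e a hwe, hse, hwe, hsa]
  have hmb : m b = d := by
    rw [hm]; simp only [Perm.mul_apply]
    rw [hwi a b hwa, hsa, hwb, hsc]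
  have hmd : m d = e := by
    rw [hm]; simp only [Perm.mul_apply]
    rw [hwi c d hwc, hsc, hwd, hse]
  have hme : m e = c := by
    rw [hm]; simp only [Perm.mul_apply]
    rw [hwi d e hwd, hsd, hwc, hsd]
  have hmc : m c = a := by
    rw [hm]; simp only [Perm.mul_apply]
    rw [hwi b c hwb, hsb, hwa, hsb]
  have h6 : (m ^ 6) a = b := by
    rw [show (6:ℕ) = 5+1 from rfl, pow_succ, pow_succ, pow_succ, pow_succ, pow_succ, pow_one]
    simp only [Perm.mul_apply]
    rw [hma, hmb, hmd, hme, hmc, hma]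
  intro hcon
  rw [hcon] at h6
  rw [Perm.one_apply] at h6
  exact (hab) h6

lemma witness8 {σ : Perm α} {a b c d e f g h : α}
    (hsa : σ a = b) (hsb : σ b = a) (hsc : σ c = d) (hsd : σ d = c) (hse : σ e = f) (hsf : σ f = e) (hsg : σ g = h) (hsh : σ h = g)
    (hab : a ≠ b) (hac : a ≠ c) (had : a ≠ d) (hae : a ≠ e) (haf : a ≠ f) (hag : a ≠ g) (hah : a ≠ h) (hbc : b ≠ c) (hbd : b ≠ d) (hbe : b ≠ e) (hbf : b ≠ f) (hbg : b ≠ g) (hbh : b ≠ h) (hcd : c ≠ d) (hce : c ≠ e) (hcf : c ≠ f) (hcg : c ≠ g) (hch : c ≠ h) (hde : d ≠ e) (hdf : d ≠ f) (hdg : d ≠ g) (hdh : d ≠ h) (hef : e ≠ f) (heg : e ≠ g) (heh : e ≠ h) (hfg : f ≠ g) (hfh : f ≠ h) (hgh : g ≠ h) :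
    ∃ w : Perm α, (σ * (w * σ * w⁻¹)) ^ 6 ≠ 1 := by
  set w : Perm α := Equiv.swap a b * Equiv.swap b c * Equiv.swap c d * Equiv.swap d e * Equiv.swap e f * Equiv.swap f g * Equiv.swap g h with hw
  have hwa : w a = b := by
    rw [hw]; simp only [Perm.mul_apply]
    rw [Equiv.swap_apply_of_ne_of_ne (hag) (hah), Equiv.swap_apply_of_ne_of_ne (haf) (hag), Equiv.swap_apply_of_ne_of_ne (hae) (haf), Equiv.swap_apply_of_ne_of_ne (had) (hae), Equiv.swap_apply_of_ne_of_ne (hac) (had), Equiv.swap_apply_of_ne_of_ne (hab) (hac), Equiv.swap_apply_left]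
  have hwb : w b = c := by
    rw [hw]; simp only [Perm.mul_apply]
    rw [Equiv.swap_apply_of_ne_of_ne (hbg) (hbh), Equiv.swap_apply_of_ne_of_ne (hbf) (hbg), Equiv.swap_apply_of_ne_of_ne (hbe) (hbf), Equiv.swap_apply_of_ne_of_ne (hbd) (hbe), Equiv.swap_apply_of_ne_of_ne (hbc) (hbd), Equiv.swap_apply_left, Equiv.swap_apply_of_ne_of_ne (hac.symm) (hbc.symm)]
  have hwc : w c = d := by
    rw [hw]; simp only [Perm.mul_apply]
    rw [Equiv.swap_apply_of_ne_of_ne (hcg) (hch), Equiv.swap_apply_of_ne_of_ne (hcf) (hcg), Equiv.swap_apply_of_ne_of_ne (hce) (hcf), Equiv.swap_apply_of_ne_of_ne (hcd) (hce), Equiv.swap_apply_left, Equiv.swap_apply_of_ne_of_ne (hbd.symm) (hcd.symm), Equiv.swap_apply_of_ne_of_ne (had.symm) (hbd.symm)]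
  have hwd : w d = e := by
    rw [hw]; simp only [Perm.mul_apply]
    rw [Equiv.swap_apply_of_ne_of_ne (hdg) (hdh), Equiv.swap_apply_of_ne_of_ne (hdf) (hdg), Equiv.swap_apply_of_ne_of_ne (hde) (hdf), Equiv.swap_apply_left, Equiv.swap_apply_of_ne_of_ne (hce.symm) (hde.symm), Equiv.swap_apply_of_ne_of_ne (hbe.symm) (hce.symm), Equiv.swap_apply_of_ne_of_ne (hae.symm) (hbe.symm)]
  have hwe : w e = f := by
    rw [hw]; simp only [Perm.mul_apply]
    rw [Equiv.swap_apply_of_ne_of_ne (heg) (heh), Equiv.swap_apply_of_ne_of_ne (hef) (heg), Equiv.swap_apply_left, Equiv.swap_apply_of_ne_of_ne (hdf.symm) (hef.symm), Equiv.swap_apply_of_ne_of_ne (hcf.symm) (hdf.symm), Equiv.swap_apply_of_ne_of_ne (hbf.symm) (hcf.symm), Equiv.swap_apply_of_ne_of_ne (haf.symm) (hbf.symm)]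
  have hwf : w f = g := by
    rw [hw]; simp only [Perm.mul_apply]
    rw [Equiv.swap_apply_of_ne_of_ne (hfg) (hfh), Equiv.swap_apply_left, Equiv.swap_apply_of_ne_of_ne (heg.symm) (hfg.symm), Equiv.swap_apply_of_ne_of_ne (hdg.symm) (heg.symm), Equiv.swap_apply_of_ne_of_ne (hcg.symm) (hdg.symm), Equiv.swap_apply_of_ne_of_ne (hbg.symm) (hcg.symm), Equiv.swap_apply_of_ne_of_ne (hag.symm) (hbg.symm)]
  have hwg : w g = h := by
    rw [hw]; simp only [Perm.mul_apply]
    rw [Equiv.swap_apply_left, Equiv.swap_apply_of_ne_of_ne (hfh.symm) (hgh.symm), Equiv.swap_apply_of_ne_of_ne (heh.symm) (hfh.symm), Equiv.swap_apply_of_ne_of_ne (hdh.symm) (heh.symm), Equiv.swap_apply_of_ne_of_ne (hch.symm) (hdh.symm), Equiv.swap_apply_of_ne_of_ne (hbh.symm) (hch.symm), Equiv.swap_apply_of_ne_of_ne (hah.symm) (hbh.symm)]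
  have hwh : w h = a := by
    rw [hw]; simp only [Perm.mul_apply]
    rw [Equiv.swap_apply_right, Equiv.swap_apply_right, Equiv.swap_apply_right, Equiv.swap_apply_right, Equiv.swap_apply_right, Equiv.swap_apply_right, Equiv.swap_apply_right]
  have hwi : ∀ x y, w x = y → w⁻¹ y = x := fun x y h => by rw [← h, Perm.inv_apply_self]
  refine ⟨w, ?_⟩
  set m := σ * (w * σ * w⁻¹) with hm
  have hma : m a = g := by
    rw [hm]; simp only [Perm.mul_apply]
    rw [hwi h a hwh, hsh, hwg, hsh]
  have hmg : m g = e := by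
    rw [hm]; simp only [Perm.mul_apply]
    rw [hwi f g hwf, hsf, hwe, hsf]
  have hme : m e = c := by
    rw [hm]; simp only [Perm.mul_apply]
    rw [hwi d e hwd, hsd, hwc, hsd]
  have hmc : m c = a := by
    rw [hm]; simp only [Perm.mul_apply]
    rw [hwi b c hwb, hsb, hwa, hsb]
  have h6 : (m ^ 6) a = e := by
    rw [show (6:ℕ) = 5+1 from rfl, pow_succ, pow_succ, pow_succ, pow_succ, pow_succ, pow_one]
    simp only [Perm.mul_apply]
    rw [hma, hmg, hme, hmc, hma, hmg]
  intro hcon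
  rw [hcon] at h6
  rw [Perm.one_apply] at h6
  exact (hae) h6


theorem exists_witness_aux [Fintype α] (hcard : Fintype.card α ≠ 6) {σ : Perm α}
    (hinv : σ * σ = 1) (h1 : σ ≠ 1) (hns : ¬ σ.IsSwap) :
    (∃ w : Perm α, (σ * (w * σ * w⁻¹)) ^ 6 ≠ 1) ∨ (∀ w : Perm α, Commute σ (w * σ * w⁻¹)) := by
  have invσ : ∀ x, σ (σ x) = x := fun x => by rw [← Perm.mul_apply, hinv, Perm.one_apply]
  obtain ⟨a, ha⟩ : ∃ a, σ a ≠ a := by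
    by_contra h; push_neg at h
    exact h1 (by ext x; simp [h x])
  set b := σ a with hb
  have hσb : σ b = a := invσ a
  have hab : a ≠ b := Ne.symm ha
  obtain ⟨c, hc, hca, hcb⟩ : ∃ c, σ c ≠ c ∧ c ≠ a ∧ c ≠ b := by
    by_contra h; push_neg at h
    refine hns ⟨a, b, hab, ?_⟩
    ext x
    rcases eq_or_ne x a with rfl | hxa
    · rw [Equiv.swap_apply_left]
    rcases eq_or_ne x b with rfl | hxb
    · rw [Equiv.swap_apply_right, hσb]
    · rw [Equiv.swap_apply_of_ne_of_ne hxa hxb]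
      by_contra hx
      exact hxb (h x hx hxa)
  set d := σ c with hd
  have hσd : σ d = c := invσ c
  have hcd : c ≠ d := Ne.symm hc
  have hac : a ≠ c := Ne.symm hca
  have hbc : b ≠ c := Ne.symm hcb
  have had : a ≠ d := by intro h; apply hcb; rw [← hσd, ← h, ← hb]
  have hbd : b ≠ d := by intro h; apply hca; rw [← hσd, ← h, hσb]
  by_cases hfix : ∃ e, σ e = e
  · obtain ⟨e, he⟩ := hfix
    have hae : a ≠ e := by intro h; apply ha; rw [hb, h, he]
    have hbe : b ≠ e := by intro h; apply hab; rw [← hσb, h, he]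
    have hce : c ≠ e := by intro h; apply hc; rw [hd, h, he]
    have hde : d ≠ e := by intro h; apply hcd; rw [← hσd, h, he]
    exact Or.inl (witness5 hb.symm hσb hd.symm hσd he
      hab hac had hae hbc hbd hbe hcd hce hde)
  · push_neg at hfix
    by_cases h5 : ∃ e, e ≠ a ∧ e ≠ b ∧ e ≠ c ∧ e ≠ d
    · obtain ⟨e, hea, heb, hec, hed⟩ := h5
      set f := σ e with hf
      have hσf : σ f = e := invσ e
      have hef : e ≠ f := Ne.symm (hfix e)
      have haf : a ≠ f := by intro h; apply heb; rw [← hσf, ← h, ← hb]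
      have hbf : b ≠ f := by intro h; apply hea; rw [← hσf, ← h, hσb]
      have hcf : c ≠ f := by intro h; apply hed; rw [← hσf, ← h, ← hd]
      have hdf : d ≠ f := by intro h; apply hec; rw [← hσf, ← h, hσd]
      by_cases h7 : ∃ g, g ≠ a ∧ g ≠ b ∧ g ≠ c ∧ g ≠ d ∧ g ≠ e ∧ g ≠ f
      · obtain ⟨g, hga, hgb, hgc, hgd, hge, hgf⟩ := h7
        set k := σ g with hk
        have hσk : σ k = g := invσ g
        have hgk : g ≠ k := Ne.symm (hfix g)
        have hak : a ≠ k := by intro h; apply hgb; rw [← hσk, ← h, ← hb]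
        have hbk : b ≠ k := by intro h; apply hga; rw [← hσk, ← h, hσb]
        have hck : c ≠ k := by intro h; apply hgd; rw [← hσk, ← h, ← hd]
        have hdk : d ≠ k := by intro h; apply hgc; rw [← hσk, ← h, hσd]
        have hek : e ≠ k := by intro h; apply hgf; rw [← hσk, ← h, ← hf]
        have hfk : f ≠ k := by intro h; apply hge; rw [← hσk, ← h, hσf]
        exact Or.inl (witness8 hb.symm hσb hd.symm hσd hf.symm hσf hk.symm hσk
          hab hac had (Ne.symm hea) haf (Ne.symm hga) hak
          hbc hbd (Ne.symm heb) hbf (Ne.symm hgb) hbk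
          hcd (Ne.symm hec) hcf (Ne.symm hgc) hck
          (Ne.symm hed) hdf (Ne.symm hgd) hdk
          hef (Ne.symm hge) hek
          (Ne.symm hgf) hfk
          hgk)
      · exfalso
        push_neg at h7
        apply hcard
        have huniv : (Finset.univ : Finset α) = {a, b, c, d, e, f} := by
          ext x
          simp only [Finset.mem_univ, true_iff, Finset.mem_insert, Finset.mem_singleton]
          rcases eq_or_ne x a with h | h1x
          · exact Or.inl h
          rcases eq_or_ne x b with h | h2x
          · exact Or.inr (Or.inl h)
          rcases eq_or_ne x c with h | h3x
          · exact Or.inr (Or.inr (Or.inl h))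
          rcases eq_or_ne x d with h | h4x
          · exact Or.inr (Or.inr (Or.inr (Or.inl h)))
          rcases eq_or_ne x e with h | h5x
          · exact Or.inr (Or.inr (Or.inr (Or.inr (Or.inl h))))
          · exact Or.inr (Or.inr (Or.inr (Or.inr (Or.inr (h7 x h1x h2x h3x h4x h5x)))))
        rw [← Finset.card_univ, huniv]
        rw [Finset.card_insert_of_notMem (by simp [hab, hac, had, Ne.symm hea, haf]),
          Finset.card_insert_of_notMem (by simp [hbc, hbd, Ne.symm heb, hbf]),
          Finset.card_insert_of_notMem (by simp [hcd, Ne.symm hec, hcf]),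
          Finset.card_insert_of_notMem (by simp [Ne.symm hed, hdf]),
          Finset.card_insert_of_notMem (by simp [hef]),
          Finset.card_singleton]
    · push_neg at h5
      refine Or.inr fun w => ?_
      have hτ : (w * σ * w⁻¹) * (w * σ * w⁻¹) = 1 := by
        have : (w * σ * w⁻¹) * (w * σ * w⁻¹) = w * (σ * σ) * w⁻¹ := by group
        rw [this, hinv]; group
      have hτf : ∀ x, (w * σ * w⁻¹) x ≠ x := by
        intro x h
        simp only [Perm.mul_apply] at h
        apply hfix (w⁻¹ x)
        rw [← Perm.inv_apply_self w (σ (w⁻¹ x)), h]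
      have hall : ∀ x, x = a ∨ x = σ a ∨ x = c ∨ x = σ c := by
        intro x
        rcases eq_or_ne x a with h | h1x
        · exact Or.inl h
        rcases eq_or_ne x b with h | h2x
        · exact Or.inr (Or.inl h)
        rcases eq_or_ne x c with h | h3x
        · exact Or.inr (Or.inr (Or.inl h))
        · exact Or.inr (Or.inr (Or.inr (h5 x h1x h2x h3x)))
      exact klein_commute hinv hτ ha hc hca hcb hall hτf


lemma swap_noncomm {x y z : α} (hxy : x ≠ y) (hxz : x ≠ z) (hyz : y ≠ z) :
    ¬ Commute (Equiv.swap x y) (Equiv.swap x z) := by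
  intro h
  have h0 := congrArg (fun p : Perm α => p y) h.eq
  simp only [Perm.mul_apply] at h0
  rw [Equiv.swap_apply_of_ne_of_ne (Ne.symm hxy) hyz, Equiv.swap_apply_right,
    Equiv.swap_apply_left] at h0
  exact hxz h0

lemma isSwap_map_of {n : ℕ} (hn : n ≠ 6) (h3 : 3 ≤ n)
    (f : Perm (Fin n) ≃* Perm (Fin n)) {p q : Fin n} (hpq : p ≠ q) :
    (f (Equiv.swap p q)).IsSwap := by
  have hcard : Fintype.card (Fin n) ≠ 6 := by rw [Fintype.card_fin]; exact hn
  have hinv : f (Equiv.swap p q) * f (Equiv.swap p q) = 1 := by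
    rw [← map_mul, Equiv.swap_mul_self, map_one]
  have hne : f (Equiv.swap p q) ≠ 1 := by
    intro h
    exact hpq (Equiv.swap_eq_one_iff.mp (f.injective (h.trans (map_one f).symm)))
  by_contra hns
  rcases exists_witness_aux hcard hinv hne hns with ⟨w, hw⟩ | hcm
  · apply hw
    set v := f.symm w with hv
    have hwv : w = f v := (f.apply_symm_apply w).symm
    rw [hwv, ← map_inv, ← map_mul, ← map_mul, ← map_mul, ← map_pow]
    rw [← Equiv.swap_apply_apply v p q]
    rw [swap_mul_swap_pow_six hpq (v.injective.ne hpq), map_one]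
  · -- pick a third point r
    obtain ⟨r, hrp, hrq⟩ : ∃ r : Fin n, r ≠ p ∧ r ≠ q := by
      by_contra h; push_neg at h
      have huniv : (Finset.univ : Finset (Fin n)) = {p, q} := by
        ext u
        simp only [Finset.mem_univ, true_iff, Finset.mem_insert, Finset.mem_singleton]
        rcases eq_or_ne u p with h' | h'
        · exact Or.inl h'
        · exact Or.inr (h u h')
      have hle := Finset.card_insert_le p ({q} : Finset (Fin n))
      rw [Finset.card_singleton] at hle
      have hcu : (Finset.univ : Finset (Fin n)).card = n := by rw [Finset.card_univ, Fintype.card_fin]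
      rw [huniv] at hcu
      omega
    have h2 := hcm (f (Equiv.swap q r))
    rw [← map_inv, ← map_mul, ← map_mul] at h2
    have h1 : Equiv.swap q r * Equiv.swap p q * (Equiv.swap q r)⁻¹ = Equiv.swap p r := by
      rw [← Equiv.swap_apply_apply (Equiv.swap q r) p q]
      rw [Equiv.swap_apply_of_ne_of_ne hpq (Ne.symm hrp), Equiv.swap_apply_left]
    rw [h1] at h2
    have h4 : Commute (Equiv.swap p q) (Equiv.swap p r) :=
      f.injective (by rw [map_mul, map_mul]; exact h2.eq)
    exact swap_noncomm hpq (Ne.symm hrp) (Ne.symm hrq) h4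


/-- For `n ≠ 6`, every automorphism of the symmetric group `Sₙ` is inner: it is given by
conjugation by some permutation. -/
theorem symmGroup_automorphism_inner_of_ne_six (n : ℕ) (hn : n ≠ 6)
    (f : Equiv.Perm (Fin n) ≃* Equiv.Perm (Fin n)) :
    ∃ g : Equiv.Perm (Fin n), ∀ x, f x = g * x * g⁻¹ := by
  rcases lt_or_ge n 3 with h3 | h3
  · interval_cases n
    · refine ⟨1, fun x => ?_⟩
      rw [one_mul, inv_one, mul_one]
      have hx : ∀ y : Perm (Fin 0), y = 1 := fun y => by ext i; exact i.elim0
      rw [hx x, map_one]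
    · refine ⟨1, fun x => ?_⟩
      rw [one_mul, inv_one, mul_one]
      have hx : ∀ y : Perm (Fin 1), y = 1 := fun y =>
        Equiv.ext fun i => Subsingleton.elim _ _
      rw [hx x, map_one]
    · refine ⟨1, fun x => ?_⟩
      rw [one_mul, inv_one, mul_one]
      have h2 : ∀ y : Perm (Fin 2), y = 1 ∨ y = Equiv.swap 0 1 := by decide
      rcases h2 x with rfl | rfl
      · exact map_one f
      · rcases h2 (f (Equiv.swap 0 1)) with h | h
        · exact absurd (f.injective (h.trans (map_one f).symm)) (by decide)
        · exact h
  · -- transport of noncommutativity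
    have hC : ∀ u v : Perm (Fin n), ¬ Commute u v → ¬ Commute (f u) (f v) := by
      intro u v h hc
      exact h (f.injective (by rw [map_mul, map_mul]; exact hc.eq))
    set i0 : Fin n := ⟨0, by omega⟩ with hi0
    set i1 : Fin n := ⟨1, by omega⟩ with hi1
    set i2 : Fin n := ⟨2, by omega⟩ with hi2
    have h01 : i0 ≠ i1 := by simp [hi0, hi1, Fin.ext_iff]
    have h02 : i0 ≠ i2 := by simp [hi0, hi2, Fin.ext_iff]
    have h12 : i1 ≠ i2 := by simp [hi1, hi2, Fin.ext_iff]
    have hswapmap : ∀ p q : Fin n, p ≠ q → (f (Equiv.swap p q)).IsSwap :=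
      fun p q hpq => isSwap_map_of hn h3 f hpq
    obtain ⟨x, y, z, hxy, hxz, hyz, hs1, hs2⟩ :
        ∃ x y z : Fin n, x ≠ y ∧ x ≠ z ∧ y ≠ z ∧
          f (Equiv.swap i0 i1) = Equiv.swap x y ∧ f (Equiv.swap i0 i2) = Equiv.swap x z := by
      obtain ⟨x, y, hxy, hs1⟩ := hswapmap i0 i1 h01
      have hnc12 : ¬ Commute (Equiv.swap x y) (f (Equiv.swap i0 i2)) := by
        rw [← hs1]; exact hC _ _ (swap_noncomm h01 h02 h12)
      rcases share_point hxy (hswapmap i0 i2 h02) hnc12 with ⟨z, hzx, hzy, hs2⟩ | ⟨z, hzx, hzy, hs2⟩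
      · exact ⟨x, y, z, hxy, Ne.symm hzx, Ne.symm hzy, hs1, hs2⟩
      · exact ⟨y, x, z, Ne.symm hxy, Ne.symm hzy, Ne.symm hzx, by rw [hs1, Equiv.swap_comm], hs2⟩
    have h12img : f (Equiv.swap i1 i2) = Equiv.swap y z := by
      have hd : Equiv.swap i1 i2 = Equiv.swap i0 i1 * Equiv.swap i0 i2 * (Equiv.swap i0 i1)⁻¹ := by
        rw [← Equiv.swap_apply_apply (Equiv.swap i0 i1) i0 i2]
        rw [Equiv.swap_apply_left, Equiv.swap_apply_of_ne_of_ne (Ne.symm h02) (Ne.symm h12)]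
      rw [hd, map_mul, map_mul, map_inv, hs1, hs2]
      rw [← Equiv.swap_apply_apply (Equiv.swap x y) x z]
      rw [Equiv.swap_apply_left, Equiv.swap_apply_of_ne_of_ne (Ne.symm hxz) (Ne.symm hyz)]
    have key2 : ∀ i : Fin n, i ≠ i0 → ∃ c, c ≠ x ∧ f (Equiv.swap i0 i) = Equiv.swap x c := by
      intro i hi
      rcases eq_or_ne i i1 with rfl | hi1
      · exact ⟨y, Ne.symm hxy, hs1⟩
      rcases eq_or_ne i i2 with rfl | hi2
      · exact ⟨z, Ne.symm hxz, hs2⟩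
      have hswi := hswapmap i0 i (Ne.symm hi)
      have hnc1 : ¬ Commute (Equiv.swap x y) (f (Equiv.swap i0 i)) := by
        rw [← hs1]; exact hC _ _ (swap_noncomm h01 (Ne.symm hi) (Ne.symm hi1))
      rcases share_point hxy hswi hnc1 with ⟨c, hcx, hcy, hc⟩ | ⟨c, hcx, hcy, hc⟩
      · exact ⟨c, hcx, hc⟩
      · have hnc2 : ¬ Commute (Equiv.swap x z) (f (Equiv.swap i0 i)) := by
          rw [← hs2]; exact hC _ _ (swap_noncomm h02 (Ne.symm hi) (Ne.symm hi2))
        rcases share_point hxz hswi hnc2 with ⟨c', hc'x, hc'z, hc'⟩ | ⟨c', hc'x, hc'z, hc'⟩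
        · exact ⟨c', hc'x, hc'⟩
        · exfalso
          have heq : Equiv.swap y c = Equiv.swap z c' := by rw [← hc, ← hc']
          have h1 : (Equiv.swap y c) y = c := Equiv.swap_apply_left _ _
          rcases eq_or_ne y c' with h | h
          · have hcz : c = z := by rw [← h1, heq, ← h, Equiv.swap_apply_right]
            have hE : Equiv.swap i0 i = Equiv.swap i1 i2 :=
              f.injective (by rw [hc, hcz, h12img])
            have h0 := congrArg (fun p : Perm (Fin n) => p i0) hE
            simp only [Equiv.swap_apply_left] at h0
            rw [Equiv.swap_apply_of_ne_of_ne h01 h02] at h0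
            exact hi h0
          · have : c = y := by rw [← h1, heq, Equiv.swap_apply_of_ne_of_ne hyz h]
            exact hcy this
    have hg0 : ∀ i, ∃ c : Fin n, (i ≠ i0 → c ≠ x ∧ f (Equiv.swap i0 i) = Equiv.swap x c) ∧
        (i = i0 → c = x) := by
      intro i
      rcases eq_or_ne i i0 with rfl | hi
      · exact ⟨x, fun h => absurd rfl h, fun _ => rfl⟩
      · obtain ⟨c, hc1, hc2⟩ := key2 i hi
        exact ⟨c, fun _ => ⟨hc1, hc2⟩, fun h => absurd h hi⟩
    choose g0 hg1 hg2 using hg0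
    have hg00 : g0 i0 = x := hg2 i0 rfl
    have hginj : Function.Injective g0 := by
      intro i j hij
      rcases eq_or_ne i i0 with rfl | hi
      · rcases eq_or_ne j i0 with rfl | hj
        · rfl
        · exact absurd (by rw [← hij, hg00]) (Ne.symm (hg1 j hj).1)
      · rcases eq_or_ne j i0 with rfl | hj
        · exact absurd (by rw [hij, hg00]) (hg1 i hi).1
        · have hE : Equiv.swap i0 i = Equiv.swap i0 j :=
            f.injective (by rw [(hg1 i hi).2, (hg1 j hj).2, hij])
          have h0 := congrArg (fun p : Perm (Fin n) => p i0) hE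
          simpa only [Equiv.swap_apply_left] using h0
    set g : Perm (Fin n) := Equiv.ofBijective g0 (Finite.injective_iff_bijective.mp hginj)
      with hgdef
    have hgapp : ∀ i, g i = g0 i := fun i => rfl
    have hone : ∀ i, i ≠ i0 → f (Equiv.swap i0 i) = g * Equiv.swap i0 i * g⁻¹ := by
      intro i hi
      rw [← Equiv.swap_apply_apply g i0 i, hgapp, hgapp, hg00]
      exact (hg1 i hi).2
    have hag : ∀ p q : Fin n, p ≠ q → f (Equiv.swap p q) = g * Equiv.swap p q * g⁻¹ := by
      intro p q hpq
      rcases eq_or_ne p i0 with rfl | hp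
      · exact hone q (Ne.symm hpq)
      rcases eq_or_ne q i0 with rfl | hq
      · rw [Equiv.swap_comm p i0]; exact hone p hp
      · have hd : Equiv.swap p q = Equiv.swap i0 p * Equiv.swap i0 q * (Equiv.swap i0 p)⁻¹ := by
          rw [← Equiv.swap_apply_apply (Equiv.swap i0 p) i0 q]
          rw [Equiv.swap_apply_left, Equiv.swap_apply_of_ne_of_ne hq (Ne.symm hpq)]
        rw [hd, map_mul, map_mul, map_inv, hone p hp, hone q hq]
        group
    refine ⟨g, fun u => ?_⟩
    have hEqOn : Set.EqOn (f.toMonoidHom) ((MulAut.conj g).toMonoidHom)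
        {σ : Perm (Fin n) | σ.IsSwap} := by
      intro σ hσ
      obtain ⟨p, q, hpq, rfl⟩ := hσ
      simpa [MulAut.conj_apply] using hag p q hpq
    have hcl := MonoidHom.eqOn_closure hEqOn
    rw [Equiv.Perm.closure_isSwap] at hcl
    have hu := hcl (SetLike.mem_coe.mpr (Subgroup.mem_top u))
    simpa [MulAut.conj_apply] using hu
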